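/- Let H₁, H₂ be Hopf algebras with bijective antipodes and let M ∈ LR(α₁,β₁,γ₁,δ₁), N ∈ LR(α₂,β₂,γ₂,δ₂), P ∈ LR(α₃,β₃,γ₃,δ₃) be Yetter-Drinfeld-Long bimodules. Then the braiding c_{M,N}(m⊗n) = β₁⁻¹(m₍₋₁₎) ▷ n₍₀₎ ⊗ m₍₀₎ ◁ δ₁⁻¹(n₍₁₎) is invariant under twisting by P: c_{ᴾM, ᴾN} = c_{M,N} as maps on the underlying vector space M ⊗ N. -/
import Mathlib


open TensorProduct

/-- The structure maps of an `H₁`-`H₂`-bimodule-bicomodule: left `H₁`-action,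
right `H₂`-action, left `H₁`-coaction and right `H₂`-coaction. -/
structure YDLStruct (k H₁ H₂ M : Type*) [Field k] [Ring H₁] [Ring H₂]
    [HopfAlgebra k H₁] [HopfAlgebra k H₂] [AddCommGroup M] [Module k M] where
  actL : H₁ ⊗[k] M →ₗ[k] M
  actR : M ⊗[k] H₂ →ₗ[k] M
  coL : M →ₗ[k] H₁ ⊗[k] M
  coR : M →ₗ[k] M ⊗[k] H₂

variable {k H₁ H₂ : Type*} [Field k] [Ring H₁] [Ring H₂]
  [HopfAlgebra k H₁] [HopfAlgebra k H₂]

/-- `(h ⊗ m) ⊗ h' ↦ (h * h') ⊗ m`. -/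
noncomputable def rmulL (k H M : Type*) [Field k] [Ring H] [HopfAlgebra k H]
    [AddCommGroup M] [Module k M] : (H ⊗[k] M) ⊗[k] H →ₗ[k] H ⊗[k] M :=
  TensorProduct.map (LinearMap.mul' k H) LinearMap.id ∘ₗ
    (TensorProduct.assoc k H H M).symm.toLinearMap ∘ₗ
    TensorProduct.map LinearMap.id (TensorProduct.comm k M H).toLinearMap ∘ₗ
    (TensorProduct.assoc k H M H).toLinearMap

/-- `h ⊗ (m ⊗ h') ↦ m ⊗ (h * h')`. -/
noncomputable def lmulR (k H M : Type*) [Field k] [Ring H] [HopfAlgebra k H]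
    [AddCommGroup M] [Module k M] : H ⊗[k] (M ⊗[k] H) →ₗ[k] M ⊗[k] H :=
  TensorProduct.map LinearMap.id (LinearMap.mul' k H) ∘ₗ
    (TensorProduct.assoc k M H H).toLinearMap ∘ₗ
    TensorProduct.map (TensorProduct.comm k H M).toLinearMap LinearMap.id ∘ₗ
    (TensorProduct.assoc k H M H).symm.toLinearMap

/-- `M` with structure maps `S` is an `(α, β, γ, δ)`-Yetter-Drinfeld-Long bimodule:
it is an `H₁`-`H₂`-bimodule and `H₁`-`H₂`-bicomodule satisfying the four compatibility
conditions (2.1)–(2.4) (in Sweedler notation: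
(2.1) `α(h₁)m₍₋₁₎ ⊗ h₂ ▷ m₍₀₎ = (h₁ ▷ m)₍₋₁₎ β(h₂) ⊗ (h₁ ▷ m)₍₀₎`;
(2.2) `(h ▷ m)₍₀₎ ⊗ (h ▷ m)₍₁₎ = h ▷ m₍₀₎ ⊗ m₍₁₎`;
(2.3) `m₍₀₎ ◁ h₁ ⊗ m₍₁₎ δ(h₂) = (m ◁ h₂)₍₀₎ ⊗ γ(h₁)(m ◁ h₂)₍₁₎`;
(2.4) `(m ◁ h)₍₋₁₎ ⊗ (m ◁ h)₍₀₎ = m₍₋₁₎ ⊗ m₍₀₎ ◁ h`). -/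
structure IsYDL (al be : H₁ →ₗ[k] H₁) (ga de : H₂ →ₗ[k] H₂)
    {M : Type*} [AddCommGroup M] [Module k M] (S : YDLStruct k H₁ H₂ M) : Prop where
  actL_one : ∀ m : M, S.actL (1 ⊗ₜ[k] m) = m
  actL_mul : ∀ (h h' : H₁) (m : M),
    S.actL ((h * h') ⊗ₜ[k] m) = S.actL (h ⊗ₜ[k] S.actL (h' ⊗ₜ[k] m))
  actR_one : ∀ m : M, S.actR (m ⊗ₜ[k] 1) = m
  actR_mul : ∀ (m : M) (h h' : H₂),
    S.actR (S.actR (m ⊗ₜ[k] h) ⊗ₜ[k] h') = S.actR (m ⊗ₜ[k] (h * h'))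
  act_bimod : ∀ (h : H₁) (m : M) (h'' : H₂),
    S.actR (S.actL (h ⊗ₜ[k] m) ⊗ₜ[k] h'') = S.actL (h ⊗ₜ[k] S.actR (m ⊗ₜ[k] h''))
  coL_counit : ∀ m : M,
    TensorProduct.lid k M (TensorProduct.map Coalgebra.counit LinearMap.id (S.coL m)) = m
  coL_coassoc : ∀ m : M,
    TensorProduct.map Coalgebra.comul LinearMap.id (S.coL m) =
      (TensorProduct.assoc k H₁ H₁ M).symm
        (TensorProduct.map LinearMap.id S.coL (S.coL m))
  coR_counit : ∀ m : M,
    TensorProduct.rid k M (TensorProduct.map LinearMap.id Coalgebra.counit (S.coR m)) = m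
  coR_coassoc : ∀ m : M,
    TensorProduct.map LinearMap.id Coalgebra.comul (S.coR m) =
      TensorProduct.assoc k M H₂ H₂
        (TensorProduct.map S.coR LinearMap.id (S.coR m))
  co_bicomod : ∀ m : M,
    TensorProduct.map LinearMap.id S.coR (S.coL m) =
      TensorProduct.assoc k H₁ M H₂
        (TensorProduct.map S.coL LinearMap.id (S.coR m))
  ydL : ∀ (h : H₁) (m : M),
    TensorProduct.map (LinearMap.mul' k H₁ ∘ₗ TensorProduct.map al LinearMap.id) S.actL
      (TensorProduct.tensorTensorTensorComm k H₁ H₁ H₁ M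
        (Coalgebra.comul (R := k) h ⊗ₜ[k] S.coL m)) =
    rmulL k H₁ M
      (TensorProduct.map (S.coL ∘ₗ S.actL ∘ₗ (TensorProduct.mk k H₁ M).flip m) be
        (Coalgebra.comul (R := k) h))
  longL : ∀ (h : H₁) (m : M),
    S.coR (S.actL (h ⊗ₜ[k] m)) =
      TensorProduct.map (S.actL ∘ₗ TensorProduct.mk k H₁ M h) LinearMap.id (S.coR m)
  ydR : ∀ (m : M) (h : H₂),
    TensorProduct.map S.actR (LinearMap.mul' k H₂ ∘ₗ TensorProduct.map LinearMap.id de)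
      (TensorProduct.tensorTensorTensorComm k M H₂ H₂ H₂
        (S.coR m ⊗ₜ[k] Coalgebra.comul (R := k) h)) =
    lmulR k H₂ M
      (TensorProduct.map ga (S.coR ∘ₗ S.actR ∘ₗ TensorProduct.mk k M H₂ m)
        (Coalgebra.comul (R := k) h))
  longR : ∀ (m : M) (h : H₂),
    S.coL (S.actR (m ⊗ₜ[k] h)) =
      TensorProduct.map LinearMap.id (S.actR ∘ₗ (TensorProduct.mk k M H₂).flip h)
        (S.coL m)

/-- The braiding `c_{M,N}(m ⊗ n) = β₁⁻¹(m₍₋₁₎) ▷ n₍₀₎ ⊗ m₍₀₎ ◁ δ₁⁻¹(n₍₁₎)`, where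
`bInv` and `dInv` are the maps `β₁⁻¹` and `δ₁⁻¹`. -/
noncomputable def braid {M N : Type*} [AddCommGroup M] [Module k M]
    [AddCommGroup N] [Module k N]
    (bInv : H₁ →ₗ[k] H₁) (dInv : H₂ →ₗ[k] H₂)
    (SM : YDLStruct k H₁ H₂ M) (SN : YDLStruct k H₁ H₂ N) :
    M ⊗[k] N →ₗ[k] N ⊗[k] M :=
  TensorProduct.map (SN.actL ∘ₗ TensorProduct.map bInv LinearMap.id)
      (SM.actR ∘ₗ TensorProduct.map LinearMap.id dInv) ∘ₗ
    (TensorProduct.tensorTensorTensorComm k H₁ M N H₂).toLinearMap ∘ₗ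
    TensorProduct.map SM.coL SN.coR

/-- The tensor product structure maps on `M ⊗ N`: here `u = α₂`, `v = α₂β₁α₂⁻¹`,
`w = γ₂`, `x = γ₂⁻¹δ₁γ₂`, so that
`h ▷ (m⊗n) = h₁▷m ⊗ h₂▷n`, `(m⊗n)₍₋₁₎ ⊗ (m⊗n)₍₀₎ = u(m₍₋₁₎)v(n₍₋₁₎) ⊗ m₍₀₎⊗n₍₀₎`,
`(m⊗n)◁h = m◁w(h₁) ⊗ n◁x(h₂)`, `(m⊗n)₍₀₎ ⊗ (m⊗n)₍₁₎ = m₍₀₎⊗n₍₀₎ ⊗ m₍₁₎n₍₁₎`. -/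
noncomputable def tensorYDL {M N : Type*} [AddCommGroup M] [Module k M]
    [AddCommGroup N] [Module k N]
    (u v : H₁ →ₗ[k] H₁) (w x : H₂ →ₗ[k] H₂)
    (SM : YDLStruct k H₁ H₂ M) (SN : YDLStruct k H₁ H₂ N) :
    YDLStruct k H₁ H₂ (M ⊗[k] N) where
  actL := TensorProduct.map SM.actL SN.actL ∘ₗ
    (TensorProduct.tensorTensorTensorComm k H₁ H₁ M N).toLinearMap ∘ₗ
    TensorProduct.map Coalgebra.comul LinearMap.id
  actR := TensorProduct.map SM.actR SN.actR ∘ₗ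
    (TensorProduct.tensorTensorTensorComm k M N H₂ H₂).toLinearMap ∘ₗ
    TensorProduct.map LinearMap.id
      (TensorProduct.map w x ∘ₗ (Coalgebra.comul : H₂ →ₗ[k] H₂ ⊗[k] H₂))
  coL := TensorProduct.map (LinearMap.mul' k H₁ ∘ₗ TensorProduct.map u v) LinearMap.id ∘ₗ
    (TensorProduct.tensorTensorTensorComm k H₁ M H₁ N).toLinearMap ∘ₗ
    TensorProduct.map SM.coL SN.coL
  coR := TensorProduct.map LinearMap.id (LinearMap.mul' k H₂) ∘ₗ
    (TensorProduct.tensorTensorTensorComm k M H₂ N H₂).toLinearMap ∘ₗ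
    TensorProduct.map SM.coR SN.coR

/-- The twisted structure on `N`: `u = β₁⁻¹α₁`, `v = α₁⁻¹α₂β₁α₂⁻¹`,
`w = γ₂⁻¹δ₁γ₂γ₁⁻¹`, `x = γ₁δ₁⁻¹`, so that `h ⇀ n = u(h) ▷ n`,
`n ↦ v(n₍₋₁₎) ⊗ n₍₀₎`, `n ↼ h = n ◁ w(h)`, `n ↦ n₍₀₎ ⊗ x(n₍₁₎)`. -/
noncomputable def twistYDL {N : Type*} [AddCommGroup N] [Module k N]
    (u v : H₁ →ₗ[k] H₁) (w x : H₂ →ₗ[k] H₂) (SN : YDLStruct k H₁ H₂ N) :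
    YDLStruct k H₁ H₂ N where
  actL := SN.actL ∘ₗ TensorProduct.map u LinearMap.id
  actR := SN.actR ∘ₗ TensorProduct.map LinearMap.id w
  coL := TensorProduct.map v LinearMap.id ∘ₗ SN.coL
  coR := TensorProduct.map LinearMap.id x ∘ₗ SN.coR


private lemma bsymm_app {A : Type*} [Ring A] [HopfAlgebra k A] (e : A ≃ₐc[k] A) (x : A) :
    (((e : A ≃ₗc[k] A) : A ≃ₗ[k] A)).symm ((e : A ≃ₗc[k] A) x) = x :=
  e.toLinearEquiv.symm_apply_apply x

private lemma bapp_symm {A : Type*} [Ring A] [HopfAlgebra k A] (e : A ≃ₐc[k] A) (x : A) :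
    (e : A ≃ₗc[k] A) (((e : A ≃ₗc[k] A) : A ≃ₗ[k] A).symm x) = x :=
  e.toLinearEquiv.apply_symm_apply x

private lemma ttt_nat {M N : Type*} [AddCommGroup M] [Module k M] [AddCommGroup N] [Module k N]
    (f : H₁ →ₗ[k] H₁) (x : H₂ →ₗ[k] H₂) :
    (TensorProduct.tensorTensorTensorComm k H₁ M N H₂).toLinearMap ∘ₗ
      TensorProduct.map (TensorProduct.map f LinearMap.id) (TensorProduct.map LinearMap.id x) =
    TensorProduct.map (TensorProduct.map f LinearMap.id) (TensorProduct.map LinearMap.id x) ∘ₗ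
      (TensorProduct.tensorTensorTensorComm k H₁ M N H₂).toLinearMap := by
  ext h m n h'
  simp [TensorProduct.tensorTensorTensorComm]

private lemma braid_twistYDL {M N : Type*} [AddCommGroup M] [Module k M]
    [AddCommGroup N] [Module k N]
    (SM : YDLStruct k H₁ H₂ M) (SN : YDLStruct k H₁ H₂ N)
    (uM vM uN vN bInv b : H₁ →ₗ[k] H₁) (wM xM wN xN dInv d : H₂ →ₗ[k] H₂)
    (hb : uN ∘ₗ bInv ∘ₗ vM = b) (hd : wM ∘ₗ dInv ∘ₗ xN = d) :
    braid bInv dInv (twistYDL uM vM wM xM SM) (twistYDL uN vN wN xN SN) =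
      braid b d SM SN := by
  unfold braid twistYDL
  dsimp only
  rw [show TensorProduct.map (TensorProduct.map vM LinearMap.id ∘ₗ SM.coL)
        (TensorProduct.map LinearMap.id xN ∘ₗ SN.coR) =
      TensorProduct.map (TensorProduct.map vM LinearMap.id)
        (TensorProduct.map LinearMap.id xN) ∘ₗ TensorProduct.map SM.coL SN.coR from
    TensorProduct.map_comp _ _ _ _]
  have key : (TensorProduct.tensorTensorTensorComm k H₁ M N H₂).toLinearMap ∘ₗ
      (TensorProduct.map (TensorProduct.map vM LinearMap.id)
        (TensorProduct.map LinearMap.id xN) ∘ₗ TensorProduct.map SM.coL SN.coR) =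
      TensorProduct.map (TensorProduct.map vM LinearMap.id)
        (TensorProduct.map LinearMap.id xN) ∘ₗ
        ((TensorProduct.tensorTensorTensorComm k H₁ M N H₂).toLinearMap ∘ₗ
          TensorProduct.map SM.coL SN.coR) := by
    rw [← LinearMap.comp_assoc, ttt_nat, LinearMap.comp_assoc]
  rw [key, ← LinearMap.comp_assoc]
  congr 1
  rw [← TensorProduct.map_comp]
  congr 1
  · rw [← hb]
    simp only [LinearMap.comp_assoc, ← TensorProduct.map_comp, LinearMap.id_comp]
  · rw [← hd]
    simp only [LinearMap.comp_assoc, ← TensorProduct.map_comp, LinearMap.id_comp]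

/-- the braiding is invariant under twisting by `P`:
`c_{ᴾM, ᴾN} = c_{M,N}` as maps on the underlying vector space `M ⊗ N`. -/
theorem braid_twist_invariant {k H₁ H₂ M N P : Type*} [Field k] [Ring H₁] [Ring H₂]
    [HopfAlgebra k H₁] [HopfAlgebra k H₂]
    [AddCommGroup M] [Module k M] [AddCommGroup N] [Module k N]
    [AddCommGroup P] [Module k P]
    (α₁ β₁ α₂ β₂ α₃ β₃ : H₁ ≃ₐc[k] H₁) (γ₁ δ₁ γ₂ δ₂ γ₃ δ₃ : H₂ ≃ₐc[k] H₂)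
    (SM : YDLStruct k H₁ H₂ M) (SN : YDLStruct k H₁ H₂ N) (SP : YDLStruct k H₁ H₂ P)
    (hM : IsYDL α₁.toLinearMap β₁.toLinearMap γ₁.toLinearMap δ₁.toLinearMap SM)
    (hN : IsYDL α₂.toLinearMap β₂.toLinearMap γ₂.toLinearMap δ₂.toLinearMap SN)
    (hP : IsYDL α₃.toLinearMap β₃.toLinearMap γ₃.toLinearMap δ₃.toLinearMap SP) :
    -- `c_{ᴾM,ᴾN}`, computed from the conjugated parameters of `ᴾM`
    braid
        (α₃.symm.toLinearMap ∘ₗ β₃.toLinearMap ∘ₗ β₁.symm.toLinearMap ∘ₗ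
          α₁.toLinearMap ∘ₗ β₃.symm.toLinearMap ∘ₗ α₁.symm.toLinearMap ∘ₗ
          α₃.toLinearMap)
        (γ₃.toLinearMap ∘ₗ γ₁.symm.toLinearMap ∘ₗ δ₃.symm.toLinearMap ∘ₗ
          γ₁.toLinearMap ∘ₗ δ₁.symm.toLinearMap ∘ₗ δ₃.toLinearMap ∘ₗ
          γ₃.symm.toLinearMap)
        -- `ᴾM` : the twist of `M` by the parameters of `P`
        (twistYDL (β₃.symm.toLinearMap ∘ₗ α₃.toLinearMap)
          (α₃.symm.toLinearMap ∘ₗ α₁.toLinearMap ∘ₗ β₃.toLinearMap ∘ₗ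
            α₁.symm.toLinearMap)
          (γ₁.symm.toLinearMap ∘ₗ δ₃.toLinearMap ∘ₗ γ₁.toLinearMap ∘ₗ
            γ₃.symm.toLinearMap)
          (γ₃.toLinearMap ∘ₗ δ₃.symm.toLinearMap) SM)
        -- `ᴾN` : the twist of `N` by the parameters of `P`
        (twistYDL (β₃.symm.toLinearMap ∘ₗ α₃.toLinearMap)
          (α₃.symm.toLinearMap ∘ₗ α₂.toLinearMap ∘ₗ β₃.toLinearMap ∘ₗ
            α₂.symm.toLinearMap)
          (γ₂.symm.toLinearMap ∘ₗ δ₃.toLinearMap ∘ₗ γ₂.toLinearMap ∘ₗ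
            γ₃.symm.toLinearMap)
          (γ₃.toLinearMap ∘ₗ δ₃.symm.toLinearMap) SN) =
      braid β₁.symm.toLinearMap δ₁.symm.toLinearMap SM SN := by
  apply braid_twistYDL
  · ext h
    simp [bsymm_app, bapp_symm]
  · ext h
    simp [bsymm_app, bapp_symm]
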